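/- arXiv:1604.01106 — 2 statements merged into one kernel-verified Lean document; each statement's English description precedes it below -/
import Mathlib

section
/- The formal power series f_4(x) = (∑_{n≥0} C(2n,n)^2 x^n)^2 satisfies, as an identity of formal power series in z, the functional equation (1+4z)^{-2} · f_4(z/(1+4z)^2) = f_4(z^2). -/
open PowerSeries

/-- Formal composition `f ∘ g` of power series, valid when `g` has zero constant term:
the `n`-th coefficient is `∑_{k=0}^{n} f_k · [z^n] g^k`. -/
noncomputable def psComp (f g : PowerSeries ℚ) : PowerSeries ℚ :=
  PowerSeries.mk fun n =>
    ∑ k ∈ Finset.range (n + 1), (PowerSeries.coeff k f) * PowerSeries.coeff n (g ^ k)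

noncomputable def f4 : PowerSeries ℚ :=
  (PowerSeries.mk fun n => ((2 * n).choose n : ℚ) ^ 2) ^ 2


noncomputable def Fq (n k : ℕ) : ℚ :=
  ((2*k).choose k : ℚ)^2 * ((n+k).choose (2*k) : ℚ) * ((-4:ℚ)^n / (-4:ℚ)^k)

noncomputable def Gq (n k : ℕ) : ℚ :=
  32*(2*(n:ℚ)+3) * (k:ℚ)^3 * ((2*k).choose k : ℚ)^2 * ((n+k+2).choose (2*k) : ℚ)
    * (-4:ℚ)^n / ((-4:ℚ)^k * ((n:ℚ)+(k:ℚ)+1) * ((n:ℚ)+(k:ℚ)+2))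

lemma cast_fact_succ (n : ℕ) : ((n+1).factorial : ℚ) = ((n:ℚ)+1) * (n.factorial : ℚ) := by
  rw [Nat.factorial_succ]; push_cast; ring

lemma cast_choose_mul {a b : ℕ} (h : a ≤ b) (c : ℕ) (hc : b - a = c) :
    (b.choose a : ℚ) = (b.factorial : ℚ) / ((a.factorial : ℚ) * (c.factorial : ℚ)) := by
  subst hc; exact Nat.cast_choose ℚ h

lemma wz_generic (k m : ℕ) :
    16*((k:ℚ)+m+1)^2 * Fq (k+m) k - ((k:ℚ)+m+2)^2 * Fq (k+m+2) k
      = Gq (k+m) (k+1) - Gq (k+m) k := by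
  have harg1 : k+m+k = 2*k+m := by ring
  have harg2 : k+m+2+k = 2*k+m+2 := by ring
  have harg3 : k+m+(k+1)+2 = 2*k+m+3 := by ring
  have hargk : 2*(k+1) = 2*k+2 := by ring
  set a : ℚ := ((2*k).factorial : ℚ) with ha
  set b : ℚ := (k.factorial : ℚ) with hb
  set f : ℚ := (m.factorial : ℚ) with hf
  set A : ℚ := ((2*k+m).factorial : ℚ) with hA
  have ha0 : a ≠ 0 := Nat.cast_ne_zero.mpr (Nat.factorial_ne_zero _)
  have hb0 : b ≠ 0 := Nat.cast_ne_zero.mpr (Nat.factorial_ne_zero _)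
  have hf0 : f ≠ 0 := Nat.cast_ne_zero.mpr (Nat.factorial_ne_zero _)
  have hA0 : A ≠ 0 := Nat.cast_ne_zero.mpr (Nat.factorial_ne_zero _)
  have e1 : ((2*k).choose k : ℚ) = a / (b*b) := by
    rw [cast_choose_mul (by omega) k (by omega)]
  have e2 : ((2*k+2).choose (k+1) : ℚ) = 2*(2*(k:ℚ)+1) * (a/(b*b)) / ((k:ℚ)+1) := by
    have h := Nat.succ_mul_centralBinom_succ k
    rw [Nat.centralBinom_eq_two_mul_choose, Nat.centralBinom_eq_two_mul_choose] at h
    have h2 : (((k+1) * ((2*(k+1)).choose (k+1)) : ℕ) : ℚ) = ((2*(2*k+1) * ((2*k).choose k) : ℕ) : ℚ) := by rw [h]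
    push_cast at h2
    rw [hargk] at h2
    rw [← e1]
    field_simp
    linarith [h2]
  have e3 : ((2*k+m).choose (2*k) : ℚ) = A / (a*f) := by
    rw [cast_choose_mul (by omega) m (by omega)]
  have e4 : ((2*k+m+2).choose (2*k) : ℚ)
      = (2*(k:ℚ)+m+1)*(2*(k:ℚ)+m+2)*A / (a*(((m:ℚ)+1)*((m:ℚ)+2)*f)) := by
    rw [cast_choose_mul (by omega) (m+2) (by omega)]
    rw [show 2*k+m+2 = (2*k+m+1)+1 by ring, cast_fact_succ, show 2*k+m+1 = (2*k+m)+1 by ring,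
      cast_fact_succ, show m+2 = (m+1)+1 by ring, cast_fact_succ, cast_fact_succ]
    push_cast
    field_simp
    ring
  have e5 : ((2*k+m+3).choose (2*k+2) : ℚ)
      = (2*(k:ℚ)+m+1)*(2*(k:ℚ)+m+2)*(2*(k:ℚ)+m+3)*A
        / ((2*(k:ℚ)+1)*(2*(k:ℚ)+2)*a*(((m:ℚ)+1)*f)) := by
    rw [cast_choose_mul (by omega) (m+1) (by omega)]
    rw [show 2*k+m+3 = (2*k+m+2)+1 by ring, cast_fact_succ, show 2*k+m+2 = (2*k+m+1)+1 by ring,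
      cast_fact_succ, show 2*k+m+1 = (2*k+m)+1 by ring, cast_fact_succ,
      show 2*k+2 = (2*k+1)+1 by ring, cast_fact_succ, show 2*k+1 = (2*k)+1 by ring, cast_fact_succ,
      cast_fact_succ]
    push_cast
    field_simp
    ring
  have hp4 : ((-4:ℚ))^k ≠ 0 := pow_ne_zero _ (by norm_num)
  have hp4m : ((-4:ℚ))^m ≠ 0 := pow_ne_zero _ (by norm_num)
  simp only [Fq, Gq]
  rw [harg1, harg2, harg3, hargk]
  rw [e1, e2, e3, e4, e5]
  rw [show k+m = m+k by ring, pow_add, show m+k+2 = m+2+k by ring, pow_add, pow_succ, pow_succ]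
  push_cast
  field_simp
  ring

lemma choose_cast_zero {a b : ℕ} (h : a < b) : (a.choose b : ℚ) = 0 := by
  rw [Nat.choose_eq_zero_of_lt h]; norm_num

lemma wz_k1 (n : ℕ) :
    16*((n:ℚ)+1)^2 * Fq n (n+1) - ((n:ℚ)+2)^2 * Fq (n+2) (n+1)
      = Gq n (n+2) - Gq n (n+1) := by
  have h1 : Fq n (n+1) = 0 := by
    simp only [Fq]
    rw [choose_cast_zero (show n+(n+1) < 2*(n+1) by omega)]
    ring
  have e2 : ((n:ℚ)+2) * ((2*(n+2)).choose (n+2) : ℚ) = 2*(2*(n:ℚ)+3) * ((2*(n+1)).choose (n+1) : ℚ) := by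
    have h := Nat.succ_mul_centralBinom_succ (n+1)
    rw [Nat.centralBinom_eq_two_mul_choose, Nat.centralBinom_eq_two_mul_choose] at h
    have h2 : (((n+1+1) * ((2*(n+1+1)).choose (n+1+1)) : ℕ) : ℚ)
        = ((2*(2*(n+1)+1) * ((2*(n+1)).choose (n+1)) : ℕ) : ℚ) := by rw [h]
    push_cast at h2
    push_cast
    linarith [h2]
  have hs1 : (n+2+(n+1)).choose (2*(n+1)) = 2*n+3 := by
    rw [show n+2+(n+1) = (2*n+2)+1 by ring, show 2*(n+1) = 2*n+2 by ring]
    exact Nat.choose_succ_self_right _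
  have hs2 : (n+(n+1)+2).choose (2*(n+1)) = 2*n+3 := by
    rw [show n+(n+1)+2 = (2*n+2)+1 by ring, show 2*(n+1) = 2*n+2 by ring]
    exact Nat.choose_succ_self_right _
  have hs3 : (n+(n+2)+2).choose (2*(n+2)) = 1 := by
    rw [show n+(n+2)+2 = 2*(n+2) by ring]; exact Nat.choose_self _
  have hp4 : ((-4:ℚ))^n ≠ 0 := pow_ne_zero _ (by norm_num)
  have e2' : ((2*(n+2)).choose (n+2) : ℚ) = 2*(2*(n:ℚ)+3) * ((2*(n+1)).choose (n+1) : ℚ) / ((n:ℚ)+2) := by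
    rw [eq_div_iff (by positivity)]
    linarith [e2]
  have hp4 : ((-4:ℚ))^n ≠ 0 := pow_ne_zero _ (by norm_num)
  rw [h1]
  simp only [Fq, Gq]
  rw [hs1, hs2, hs3, e2']
  rw [show n+2 = n+1+1 by ring, pow_succ, pow_succ]
  push_cast
  field_simp
  ring

lemma wz_k2 (n : ℕ) :
    16*((n:ℚ)+1)^2 * Fq n (n+2) - ((n:ℚ)+2)^2 * Fq (n+2) (n+2)
      = Gq n (n+3) - Gq n (n+2) := by
  have h1 : Fq n (n+2) = 0 := by
    simp only [Fq]
    rw [choose_cast_zero (show n+(n+2) < 2*(n+2) by omega)]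
    ring
  have h2 : Gq n (n+3) = 0 := by
    simp only [Gq]
    rw [choose_cast_zero (show n+(n+3)+2 < 2*(n+3) by omega)]
    ring
  have hs3 : (n+(n+2)+2).choose (2*(n+2)) = 1 := by
    rw [show n+(n+2)+2 = 2*(n+2) by ring]; exact Nat.choose_self _
  have hs4 : (n+2+(n+2)).choose (2*(n+2)) = 1 := by
    rw [show n+2+(n+2) = 2*(n+2) by ring]; exact Nat.choose_self _
  have hp4 : ((-4:ℚ))^(n+2) ≠ 0 := pow_ne_zero _ (by norm_num)
  rw [h1, h2]
  simp only [Fq, Gq]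
  rw [hs3, hs4]
  push_cast
  field_simp
  ring

lemma wz_big (n j : ℕ) :
    16*((n:ℚ)+1)^2 * Fq n (n+3+j) - ((n:ℚ)+2)^2 * Fq (n+2) (n+3+j)
      = Gq n (n+3+j+1) - Gq n (n+3+j) := by
  have h1 : Fq n (n+3+j) = 0 := by
    simp only [Fq]; rw [choose_cast_zero (show n+(n+3+j) < 2*(n+3+j) by omega)]; ring
  have h2 : Fq (n+2) (n+3+j) = 0 := by
    simp only [Fq]; rw [choose_cast_zero (show n+2+(n+3+j) < 2*(n+3+j) by omega)]; ring
  have h3 : Gq n (n+3+j) = 0 := by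
    simp only [Gq]; rw [choose_cast_zero (show n+(n+3+j)+2 < 2*(n+3+j) by omega)]; ring
  have h4 : Gq n (n+3+j+1) = 0 := by
    simp only [Gq]; rw [choose_cast_zero (show n+(n+3+j+1)+2 < 2*(n+3+j+1) by omega)]; ring
  rw [h1, h2, h3, h4]; ring

lemma wz (n k : ℕ) :
    16*((n:ℚ)+1)^2 * Fq n k - ((n:ℚ)+2)^2 * Fq (n+2) k
      = Gq n (k+1) - Gq n k := by
  rcases le_or_gt k n with h | h
  · obtain ⟨m, rfl⟩ := Nat.exists_eq_add_of_le h
    have := wz_generic k m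
    push_cast at this ⊢
    linear_combination this
  · obtain ⟨j, rfl⟩ : ∃ j, k = n+1+j := ⟨k - (n+1), by omega⟩
    match j with
    | 0 => exact wz_k1 n
    | 1 => exact wz_k2 n
    | (j+2) =>
      have := wz_big n j
      have harg : n+3+j = n+1+(j+2) := by ring
      rw [harg] at this
      convert this using 3 <;> omega

noncomputable def Sq (n : ℕ) : ℚ := ∑ k ∈ Finset.range (n+1), Fq n k

lemma Fq_eq_zero {n k : ℕ} (h : n < k) : Fq n k = 0 := by
  simp only [Fq]; rw [choose_cast_zero (show n+k < 2*k by omega)]; ring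

lemma Sq_rec (n : ℕ) : ((n:ℚ)+2)^2 * Sq (n+2) = 16*((n:ℚ)+1)^2 * Sq n := by
  have htel : ∑ k ∈ Finset.range (n+3), (Gq n (k+1) - Gq n k) = Gq n (n+3) - Gq n 0 :=
    Finset.sum_range_sub (Gq n) (n+3)
  have h0 : Gq n 0 = 0 := by simp [Gq]
  have htop : Gq n (n+3) = 0 := by
    simp only [Gq]; rw [choose_cast_zero (show n+(n+3)+2 < 2*(n+3) by omega)]; ring
  have hsum : ∑ k ∈ Finset.range (n+3),
      (16*((n:ℚ)+1)^2 * Fq n k - ((n:ℚ)+2)^2 * Fq (n+2) k) = 0 := by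
    rw [Finset.sum_congr rfl (fun k _ => wz n k), htel, h0, htop]; ring
  rw [Finset.sum_sub_distrib, ← Finset.mul_sum, ← Finset.mul_sum] at hsum
  have hS1 : ∑ k ∈ Finset.range (n+3), Fq n k = Sq n := by
    rw [Finset.sum_range_succ, Finset.sum_range_succ, Fq_eq_zero (by omega),
      Fq_eq_zero (by omega)]
    simp [Sq]
  have hS2 : ∑ k ∈ Finset.range (n+3), Fq (n+2) k = Sq (n+2) := rfl
  rw [hS1, hS2] at hsum
  linarith

lemma Sq_values : ∀ m : ℕ, Sq (2*m) = (((2*m).choose m : ℚ))^2 ∧ Sq (2*m+1) = 0 := by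
  intro m
  induction m with
  | zero => constructor <;> norm_num [Sq, Fq, Finset.sum_range_succ]
  | succ m ih =>
    obtain ⟨ih1, ih2⟩ := ih
    have e2 : ((m:ℚ)+1) * ((2*(m+1)).choose (m+1) : ℚ)
        = 2*(2*(m:ℚ)+1) * ((2*m).choose m : ℚ) := by
      have h := Nat.succ_mul_centralBinom_succ m
      rw [Nat.centralBinom_eq_two_mul_choose, Nat.centralBinom_eq_two_mul_choose] at h
      have h2 : (((m+1) * ((2*(m+1)).choose (m+1)) : ℕ) : ℚ)
          = ((2*(2*m+1) * ((2*m).choose m) : ℕ) : ℚ) := by rw [h]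
      push_cast at h2
      linarith [h2]
    constructor
    · have hr := Sq_rec (2*m)
      rw [show 2*m+2 = 2*(m+1) by ring] at hr
      rw [ih1] at hr
      have hne : ((2*(m:ℚ)+2))^2 ≠ 0 := by positivity
      push_cast at hr ⊢
      have hsq : ((m:ℚ)+1)^2 * ((2*(m+1)).choose (m+1) : ℚ)^2
          = 4*(2*(m:ℚ)+1)^2 * ((2*m).choose m : ℚ)^2 := by
        linear_combination (((m:ℚ)+1) * ((2*(m+1)).choose (m+1) : ℚ)
          + 2*(2*(m:ℚ)+1) * ((2*m).choose m : ℚ)) * e2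
      have hkey : (2*(m:ℚ)+2)^2 * Sq (2*(m+1))
          = (2*(m:ℚ)+2)^2 * ((2*(m+1)).choose (m+1) : ℚ)^2 := by
        linear_combination hr - 4*hsq
      exact mul_left_cancel₀ hne hkey
    · have hr := Sq_rec (2*m+1)
      rw [ih2] at hr
      have h3 : (2*(m:ℚ)+1+2)^2 ≠ 0 := by positivity
      rw [show 2*m+1+2 = 2*(m+1)+1 by ring] at hr
      push_cast at hr
      have := mul_eq_zero.mp (by linarith [hr] : (2*(m:ℚ)+1+2)^2 * Sq (2*(m+1)+1) = 0)
      rcases this with h | h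
      · exact absurd h h3
      · exact h

lemma coeff_pow_eq_zero {g : PowerSeries ℚ} (hg : constantCoeff g = 0)
    {k q : ℕ} (h : q < k) : coeff q (g ^ k) = 0 := by
  have hdvd : (X : PowerSeries ℚ)^k ∣ g^k := pow_dvd_pow_of_dvd (X_dvd_iff.mpr hg) k
  exact (X_pow_dvd_iff.mp hdvd) q h

lemma coeff_mul_psComp (h f g : PowerSeries ℚ) (hg : constantCoeff g = 0) (n : ℕ) :
    coeff n (h * psComp f g)
      = ∑ k ∈ Finset.range (n+1), coeff k f * coeff n (h * g ^ k) := by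
  calc coeff n (h * psComp f g)
      = ∑ pq ∈ Finset.HasAntidiagonal.antidiagonal n,
          coeff pq.1 h * ∑ k ∈ Finset.range (n+1), coeff k f * coeff pq.2 (g^k) := by
        rw [coeff_mul]
        refine Finset.sum_congr rfl fun pq hpq => ?_
        congr 1
        rw [psComp, coeff_mk]
        refine Finset.sum_subset (Finset.range_subset_range.mpr ?_) ?_
        · have := Finset.HasAntidiagonal.antidiagonal.snd_le hpq
          omega
        · intro x _ hx
          have hlt : pq.2 < x := by
            simp only [Finset.mem_range] at hx; omega
          rw [coeff_pow_eq_zero hg hlt, mul_zero]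
    _ = ∑ k ∈ Finset.range (n+1), coeff k f *
          ∑ pq ∈ Finset.HasAntidiagonal.antidiagonal n, coeff pq.1 h * coeff pq.2 (g^k) := by
        simp only [Finset.mul_sum]
        rw [Finset.sum_comm]
        exact Finset.sum_congr rfl fun k _ => Finset.sum_congr rfl fun pq _ => by ring
    _ = ∑ k ∈ Finset.range (n+1), coeff k f * coeff n (h * g ^ k) := by
        exact Finset.sum_congr rfl fun k _ => by rw [coeff_mul]

lemma tri_sum (t : ℕ → ℕ → ℚ) (n : ℕ) (h0 : ∀ i j, n < i + j → t i j = 0) :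
    ∑ m ∈ Finset.range (n+1), ∑ p ∈ Finset.HasAntidiagonal.antidiagonal m, t p.1 p.2
      = ∑ i ∈ Finset.range (n+1), ∑ j ∈ Finset.range (n+1), t i j := by
  have step1 : ∑ m ∈ Finset.range (n+1), ∑ p ∈ Finset.HasAntidiagonal.antidiagonal m, t p.1 p.2
      = ∑ p ∈ (Finset.range (n+1) ×ˢ Finset.range (n+1)).filter
          (fun p : ℕ × ℕ => p.1 + p.2 ≤ n), t p.1 p.2 := by
    rw [Finset.sum_sigma']
    refine Finset.sum_nbij' (fun x => x.2) (fun p => ⟨p.1 + p.2, p⟩) ?_ ?_ ?_ ?_ ?_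
    · intro a ha
      simp only [Finset.mem_sigma, Finset.mem_range, Finset.HasAntidiagonal.mem_antidiagonal] at ha
      simp only [Finset.mem_filter, Finset.mem_product, Finset.mem_range]
      omega
    · intro p hp
      simp only [Finset.mem_filter, Finset.mem_product, Finset.mem_range] at hp
      refine Finset.mem_sigma.mpr ⟨Finset.mem_range.mpr ?_, Finset.HasAntidiagonal.mem_antidiagonal.mpr rfl⟩
      show p.1 + p.2 < n + 1
      omega
    · intro a ha
      simp only [Finset.mem_sigma, Finset.mem_range, Finset.HasAntidiagonal.mem_antidiagonal] at ha
      obtain ⟨h1, h2⟩ := ha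
      exact Sigma.ext (by simpa using h2) (by simp)
    · intro p _; rfl
    · intro a _; rfl
  rw [step1]
  rw [Finset.sum_filter_of_ne]
  · rw [Finset.sum_product]
  · intro p _ hne
    by_contra hgt
    exact hne (h0 p.1 p.2 (by omega))

lemma psComp_mul (f1 f2 g : PowerSeries ℚ) (hg : constantCoeff g = 0) :
    psComp (f1 * f2) g = psComp f1 g * psComp f2 g := by
  ext n
  have hrhs : coeff n (psComp f1 g * psComp f2 g)
      = ∑ j ∈ Finset.range (n+1), ∑ k ∈ Finset.range (n+1),
          coeff j f1 * coeff k f2 * coeff n (g ^ (j + k)) := by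
    rw [mul_comm (psComp f1 g) (psComp f2 g), coeff_mul_psComp _ f1 g hg]
    refine Finset.sum_congr rfl fun j _ => ?_
    rw [mul_comm (psComp f2 g) (g^j), coeff_mul_psComp _ f2 g hg, Finset.mul_sum]
    refine Finset.sum_congr rfl fun k _ => ?_
    rw [← pow_add]
    ring
  have hlhs : coeff n (psComp (f1 * f2) g)
      = ∑ m ∈ Finset.range (n+1), ∑ p ∈ Finset.HasAntidiagonal.antidiagonal m,
          coeff p.1 f1 * coeff p.2 f2 * coeff n (g ^ (p.1 + p.2)) := by
    rw [psComp, coeff_mk]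
    refine Finset.sum_congr rfl fun m _ => ?_
    rw [coeff_mul, Finset.sum_mul]
    refine Finset.sum_congr rfl fun p hp => ?_
    have hpm : p.1 + p.2 = m := Finset.HasAntidiagonal.mem_antidiagonal.mp hp
    rw [hpm]
  calc coeff n (psComp (f1 * f2) g)
      = ∑ m ∈ Finset.range (n+1), ∑ p ∈ Finset.HasAntidiagonal.antidiagonal m,
          coeff p.1 f1 * coeff p.2 f2 * coeff n (g ^ (p.1 + p.2)) := hlhs
    _ = ∑ i ∈ Finset.range (n+1), ∑ j ∈ Finset.range (n+1),
          coeff i f1 * coeff j f2 * coeff n (g ^ (i + j)) :=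
        tri_sum (fun i j => coeff i f1 * coeff j f2 * coeff n (g ^ (i + j))) n
          (fun i j hij => by
            show coeff i f1 * coeff j f2 * coeff n (g ^ (i + j)) = 0
            rw [coeff_pow_eq_zero hg hij, mul_zero])
    _ = coeff n (psComp f1 g * psComp f2 g) := hrhs.symm

lemma inv_one_add_four : (1 + 4*X : PowerSeries ℚ)⁻¹ = mk fun m => (-4:ℚ)^m := by
  have hc : constantCoeff (1 + 4*X : PowerSeries ℚ) ≠ 0 := by simp
  symm
  rw [PowerSeries.eq_inv_iff_mul_eq_one hc]
  ext n
  rw [mul_add, mul_one]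
  cases n with
  | zero => simp
  | succ n =>
    rw [map_add]
    have h1 : coeff (n+1) ((mk fun m => (-4:ℚ)^m) * (4*X)) = 4 * (-4:ℚ)^n := by
      rw [show (mk fun m => (-4:ℚ)^m) * (4*X) = ((4:ℚ⟦X⟧) * mk fun m => (-4:ℚ)^m) * X by ring,
        coeff_succ_mul_X]
      rw [show (4:ℚ⟦X⟧) = C 4 by simp [PowerSeries.C_eq_algebraMap]; rfl]
      rw [coeff_C_mul, coeff_mk]
    rw [h1, coeff_mk, coeff_one]
    simp only [pow_succ, Nat.succ_ne_zero, if_false]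
    ring

lemma u_pow (j : ℕ) :
    ((1 + 4*X : PowerSeries ℚ)⁻¹)^(j+1) = mk fun m => (-4:ℚ)^m * ((m+j).choose j : ℚ) := by
  induction j with
  | zero => rw [pow_one, inv_one_add_four]; ext m; simp
  | succ j ih =>
    rw [pow_succ, ih, inv_one_add_four]
    ext n
    rw [coeff_mul, Finset.Nat.sum_antidiagonal_eq_sum_range_succ_mk]
    simp only [coeff_mk]
    have hterm : ∀ k ∈ Finset.range (n+1),
        (-4:ℚ)^k * ((k+j).choose j : ℚ) * (-4:ℚ)^(n-k)
          = (-4:ℚ)^n * ((k+j).choose j : ℚ) := by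
      intro k hk
      rw [Finset.mem_range] at hk
      rw [show (-4:ℚ)^n = (-4:ℚ)^k * (-4:ℚ)^(n-k) by rw [← pow_add]; congr 1; omega]
      ring
    rw [Finset.sum_congr rfl hterm, ← Finset.mul_sum]
    have hhs : ∑ k ∈ Finset.range (n+1), ((k+j).choose j : ℚ) = ((n+j+1).choose (j+1) : ℚ) := by
      rw [← Nat.cast_sum]
      rw [Nat.sum_range_add_choose n j]
    rw [hhs, show n+j+1 = n+(j+1) by omega]

noncomputable def Pc : PowerSeries ℚ := mk fun n => ((2 * n).choose n : ℚ) ^ 2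

lemma key_eq :
    (1 + 4*X : PowerSeries ℚ)⁻¹ * psComp Pc (X * ((1 + 4*X : PowerSeries ℚ)⁻¹)^2)
      = psComp Pc (X^2) := by
  have hw : constantCoeff (X * ((1 + 4*X : PowerSeries ℚ)⁻¹)^2) = 0 := by simp
  ext n
  rw [coeff_mul_psComp _ _ _ hw]
  have hterm : ∀ k ∈ Finset.range (n+1),
      coeff k Pc * coeff n ((1 + 4*X : PowerSeries ℚ)⁻¹
        * (X * ((1 + 4*X : PowerSeries ℚ)⁻¹)^2)^k) = Fq n k := by
    intro k hk
    rw [Finset.mem_range] at hk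
    have hre : (1 + 4*X : PowerSeries ℚ)⁻¹ * (X * ((1 + 4*X : PowerSeries ℚ)⁻¹)^2)^k
        = X^k * ((1 + 4*X : PowerSeries ℚ)⁻¹)^(2*k+1) := by
      rw [mul_pow, ← pow_mul]; ring
    rw [hre, u_pow (2*k)]
    have hcoeff : coeff n ((X:PowerSeries ℚ)^k
          * mk fun m => (-4:ℚ)^m * ((m + 2*k).choose (2*k) : ℚ))
        = (-4:ℚ)^(n-k) * (((n-k) + 2*k).choose (2*k) : ℚ) := by
      conv_lhs => rw [show n = (n-k) + k by omega]
      rw [coeff_X_pow_mul, coeff_mk]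
    rw [hcoeff, Pc, coeff_mk, Fq]
    rw [show (n-k) + 2*k = n+k by omega]
    rw [show (-4:ℚ)^n = (-4:ℚ)^k * (-4:ℚ)^(n-k) by rw [← pow_add]; congr 1; omega]
    have h4 : ((-4:ℚ))^k ≠ 0 := pow_ne_zero _ (by norm_num)
    field_simp
  rw [Finset.sum_congr rfl hterm]
  rw [psComp, coeff_mk]
  have hterm2 : ∀ k ∈ Finset.range (n+1),
      coeff k Pc * coeff n (((X:PowerSeries ℚ)^2)^k)
        = (if n = 2*k then (((2*k).choose k : ℚ))^2 else 0) := by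
    intro k _
    rw [← pow_mul, coeff_X_pow, Pc, coeff_mk]
    split_ifs with h <;> simp
  rw [Finset.sum_congr rfl hterm2]
  rcases Nat.even_or_odd n with he | ho
  · obtain ⟨m, hm⟩ := he
    have hn : n = 2*m := by omega
    have hsum : ∑ k ∈ Finset.range (n+1), (if n = 2*k then (((2*k).choose k : ℚ))^2 else 0)
        = (((2*m).choose m : ℚ))^2 := by
      rw [Finset.sum_eq_single m]
      · simp [hn]
      · intro b _ hb
        have : n ≠ 2*b := by omega
        simp [this]
      · intro hmem
        exact absurd (Finset.mem_range.mpr (by omega)) hmem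
    rw [hsum]
    have hS : ∑ k ∈ Finset.range (n+1), Fq n k = Sq n := rfl
    rw [hS, hn]
    exact (Sq_values m).1
  · obtain ⟨m, hm⟩ := ho
    have hz : ∑ k ∈ Finset.range (n+1), (if n = 2*k then (((2*k).choose k : ℚ))^2 else 0)
        = 0 := by
      apply Finset.sum_eq_zero
      intro k _
      have : n ≠ 2*k := by omega
      simp [this]
    rw [hz]
    have hS : ∑ k ∈ Finset.range (n+1), Fq n k = Sq n := rfl
    rw [hS, show n = 2*m+1 from by omega]
    exact (Sq_values m).2

theorem functional_equation_f4 :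
    ((1 + 4 * X : PowerSeries ℚ)⁻¹) ^ 2 * psComp f4 (X * ((1 + 4 * X)⁻¹) ^ 2)
      = psComp f4 (X ^ 2) := by
  have hw : constantCoeff (X * ((1 + 4*X : PowerSeries ℚ)⁻¹)^2) = 0 := by simp
  have hx : constantCoeff ((X : PowerSeries ℚ)^2) = 0 := by simp
  have hf4 : f4 = Pc * Pc := by rw [f4, Pc, ← sq]
  rw [hf4]
  calc ((1 + 4 * X : PowerSeries ℚ)⁻¹) ^ 2 * psComp (Pc * Pc) (X * ((1 + 4 * X)⁻¹) ^ 2)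
      = ((1 + 4*X : PowerSeries ℚ)⁻¹ * psComp Pc (X * ((1 + 4*X : PowerSeries ℚ)⁻¹)^2))
        * ((1 + 4*X : PowerSeries ℚ)⁻¹ * psComp Pc (X * ((1 + 4*X : PowerSeries ℚ)⁻¹)^2)) := by
        rw [psComp_mul _ _ _ hw]; ring
    _ = psComp Pc (X^2) * psComp Pc (X^2) := by rw [key_eq]
    _ = psComp (Pc * Pc) (X^2) := (psComp_mul _ _ _ hx).symm
end

section
/- The formal power series g_c(x) = ∑_{n≥0} (∑_{k=0}^{n} C(n,k)^3) x^n (the generating function of the Franel numbers) satisfies, as an identity of formal power series in z, g_c(z^3) = (1 + 2z + 4z^2)^{-1} · g_c(z·(1 − z + z^2)/(1 + 2z + 4z^2)). -/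
open PowerSeries Finset


section comp

variable {w f g : PowerSeries ℚ}

lemma coeff_pow_eq_zero_s10 (hw : constantCoeff w = 0) {k n : ℕ} (h : n < k) :
    coeff n (w ^ k) = 0 := by
  obtain ⟨u, rfl⟩ := X_dvd_iff.mpr hw
  rw [mul_pow, coeff_X_pow_mul', if_neg (by omega)]

/-- truncated sum -/
noncomputable def Tr (N : ℕ) (f w : PowerSeries ℚ) : PowerSeries ℚ :=
  ∑ k ∈ Finset.range N, C (coeff k f) * w ^ k

lemma coeff_Tr (N n : ℕ) : coeff n (Tr N f w) = ∑ k ∈ range N, coeff k f * coeff n (w ^ k) := by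
  rw [Tr, map_sum]
  exact Finset.sum_congr rfl fun k _ => coeff_C_mul _ _ _

lemma coeff_psComp_Tr (hw : constantCoeff w = 0) {n N : ℕ} (hnN : n < N) :
    coeff n (psComp f w) = coeff n (Tr N f w) := by
  rw [psComp, coeff_mk, coeff_Tr]
  apply Finset.sum_subset (Finset.range_subset_range.mpr hnN)
  intro k hk hnk
  rw [coeff_pow_eq_zero_s10 hw (by simp only [mem_range] at hnk ⊢; omega), mul_zero]

lemma psComp_add : psComp (f + g) w = psComp f w + psComp g w := by
  ext n
  simp only [psComp, coeff_mk, map_add, add_mul, Finset.sum_add_distrib]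

lemma psComp_C_mul (a : ℚ) : psComp (C a * f) w = C a * psComp f w := by
  ext n
  simp only [psComp, coeff_mk, coeff_C_mul, Finset.mul_sum, mul_assoc]

lemma psComp_zero : psComp 0 w = 0 := by
  ext n; simp [psComp]

lemma psComp_sub : psComp (f - g) w = psComp f w - psComp g w := by
  ext n
  simp only [psComp, coeff_mk, map_sub, sub_mul, Finset.sum_sub_distrib]

lemma Tr_X_pow_mul (j N : ℕ) : Tr (j + N) (X ^ j * f) w = w ^ j * Tr N f w := by
  rw [Tr, Tr, Finset.mul_sum, Finset.sum_range_add]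
  have h1 : ∀ k ∈ range j, C (coeff k (X ^ j * f)) * w ^ k = 0 := by
    intro k hk
    rw [coeff_X_pow_mul', if_neg (by simp at hk; omega)]
    simp
  rw [Finset.sum_eq_zero h1, zero_add]
  apply Finset.sum_congr rfl
  intro k _
  rw [show j + k = k + j from Nat.add_comm j k, coeff_X_pow_mul]
  ring

lemma psComp_X_pow_mul (hw : constantCoeff w = 0) (j : ℕ) :
    psComp (X ^ j * f) w = w ^ j * psComp f w := by
  ext n
  rw [coeff_psComp_Tr hw (show n < j + (n + 1) by omega), Tr_X_pow_mul,
    coeff_mul, coeff_mul]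
  apply Finset.sum_congr rfl
  rintro ⟨s, t⟩ hst
  simp only [HasAntidiagonal.mem_antidiagonal] at hst
  rw [coeff_psComp_Tr hw (show t < n + 1 by omega)]

end comp

section chain

variable {w f : PowerSeries ℚ}

lemma D_Tr (N : ℕ) :
    d⁄dX ℚ (Tr (N + 1) f w) = Tr N (d⁄dX ℚ f) w * d⁄dX ℚ w := by
  rw [Tr, Tr, map_sum, Finset.sum_range_succ', Finset.sum_mul]
  have h0 : d⁄dX ℚ (C (coeff 0 f) * w ^ 0) = 0 := by
    simp
  rw [h0, add_zero]
  apply Finset.sum_congr rfl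
  intro i _
  rw [Derivation.leibniz, Derivation.leibniz_pow, derivative_C]
  rw [coeff_derivative]
  simp only [smul_zero, add_zero, smul_eq_mul, Nat.add_sub_cancel, map_mul]
  push_cast
  rw [nsmul_eq_mul]
  have hC : (C (R := ℚ)) ((i : ℚ) + 1) = ((i + 1 : ℕ) : ℚ⟦X⟧) := by
    rw [← map_natCast (C (R := ℚ)) (i+1)]; push_cast; ring
  rw [hC]
  ring
end chain

lemma psComp_deriv (hw : constantCoeff w = 0) (f : PowerSeries ℚ) :
    d⁄dX ℚ (psComp f w) = psComp (d⁄dX ℚ f) w * d⁄dX ℚ w := by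
  ext n
  rw [coeff_derivative, coeff_psComp_Tr hw (show n + 1 < n + 2 by omega),
    ← coeff_derivative, D_Tr, coeff_mul, coeff_mul]
  apply Finset.sum_congr rfl
  rintro ⟨s, t⟩ hst
  simp only [HasAntidiagonal.mem_antidiagonal] at hst
  rw [coeff_psComp_Tr hw (show s < n + 1 by omega)]

lemma coeff_psComp_X_cubed (f : PowerSeries ℚ) (n : ℕ) :
    coeff n (psComp f (X ^ 3)) = if 3 ∣ n then coeff (n / 3) f else 0 := by
  rw [psComp, coeff_mk]
  have hterm : ∀ k, coeff k f * coeff n ((X ^ 3) ^ k) =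
      if n = 3 * k then coeff k f else 0 := by
    intro k
    rw [← pow_mul, coeff_X_pow]
    split_ifs <;> simp_all
  rw [Finset.sum_congr rfl fun k _ => hterm k]
  by_cases h : 3 ∣ n
  · obtain ⟨m, rfl⟩ := h
    rw [Finset.sum_eq_single m]
    · simp [Nat.mul_div_cancel_left]
    · intro k _ hk; rw [if_neg (by omega)]
    · intro hm; exact absurd (Finset.mem_range.mpr (by omega)) hm
  · rw [if_neg h]
    apply Finset.sum_eq_zero
    intro k _
    rw [if_neg (fun hc => h ⟨k, hc⟩)]

lemma coeff_zero_psComp (f w : PowerSeries ℚ) : coeff 0 (psComp f w) = coeff 0 f := by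
  simp [psComp]
def Pt (n k : ℚ) : ℚ :=
  4*(k-1)^3 - 22*n + 39*n*k - 18*n*k^2 - 32*n^2 + 27*n^2*k - 14*n^3

lemma choose_rel_B (n j : ℕ) :
    ((j:ℚ)+1) * (n.choose (j+1) : ℚ) = ((n:ℚ) - j) * (n.choose j : ℚ) := by
  rcases le_or_gt j n with h | h
  · have := congrArg (fun x : ℕ => (x : ℚ)) (Nat.choose_succ_right_eq n j)
    have hcast : ((n - j : ℕ) : ℚ) = (n:ℚ) - j := by push_cast [Nat.cast_sub h]; ring
    push_cast at this; rw [← hcast]; push_cast; linarith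
  · rw [Nat.choose_eq_zero_of_lt h, Nat.choose_eq_zero_of_lt (by omega)]; simp

lemma choose_rel_D (n j : ℕ) (hn : 1 ≤ n) :
    (n:ℚ) * ((n-1).choose (j+1) : ℚ) = ((n:ℚ) - ((j:ℚ)+1)) * (n.choose (j+1) : ℚ) := by
  rcases le_or_gt (j+1) n with h | h
  · have h1 : n - 1 + 1 = n := by omega
    have := congrArg (fun x : ℕ => (x : ℚ)) (Nat.choose_mul_succ_eq (n-1) (j+1))
    rw [h1] at this
    have hcast : ((n - (j+1) : ℕ) : ℚ) = (n:ℚ) - ((j:ℚ)+1) := by push_cast [Nat.cast_sub h]; ring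
    push_cast at this; rw [← hcast]; push_cast; linarith
  · rw [Nat.choose_eq_zero_of_lt h, Nat.choose_eq_zero_of_lt (by omega)]; simp

lemma claimS (n j : ℕ) (hn : 1 ≤ n) :
    (n:ℚ)*((n:ℚ)+1)^2*((n+1).choose (j+1):ℚ)^3 - (n:ℚ)*(7*(n:ℚ)^2+7*(n:ℚ)+2)*(n.choose (j+1):ℚ)^3
      - 8*(n:ℚ)^3*((n-1).choose (j+1):ℚ)^3
    = (n.choose (j+1):ℚ)^3 * Pt (n:ℚ) ((j:ℚ)+2) - (n.choose j:ℚ)^3 * Pt (n:ℚ) ((j:ℚ)+1) := by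
  set a := (n.choose (j+1) : ℚ) with ha
  set b := (n.choose j : ℚ) with hb
  set c := ((n+1).choose (j+1) : ℚ) with hc'
  set d := ((n-1).choose (j+1) : ℚ) with hd'
  have hc : c = a + b := by
    rw [hc', ha, hb, Nat.choose_succ_succ n j]; push_cast; ring
  have hB : ((j:ℚ)+1) * a = ((n:ℚ) - (j:ℚ)) * b := choose_rel_B n j
  have hd : (n:ℚ) * d = ((n:ℚ) - ((j:ℚ)+1)) * a := choose_rel_D n j hn
  have hk3 : (((j:ℚ)+1))^3 ≠ 0 := by positivity
  apply mul_left_cancel₀ hk3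
  set N : ℚ := (n:ℚ)
  set J : ℚ := (j:ℚ)
  unfold Pt
  linear_combination
    ((J+1)^3 * (N*(N+1)^2*(c^2 + c*(a+b) + (a+b)^2))) * hc
    + ((J+1)^3 * (-8) * ((N*d)^2 + (N*d)*((N-J-1)*a) + ((N-J-1)*a)^2)) * hd
    + ( ((J+1)^2*(N*(N+1)^2 - N*(7*N^2+7*N+2) - 8*(N-J-1)^3 - (4*(J+1)^3 - 22*N + 39*N*(J+2) - 18*N*(J+2)^2 - 32*N^2 + 27*N^2*(J+2) - 14*N^3)))*a^2
      + ((J+1)^2*(3*N*(N+1)^2) + (J+1)*(N-J)*(N*(N+1)^2 - N*(7*N^2+7*N+2) - 8*(N-J-1)^3 - (4*(J+1)^3 - 22*N + 39*N*(J+2) - 18*N*(J+2)^2 - 32*N^2 + 27*N^2*(J+2) - 14*N^3)))*a*b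
      + ((J+1)^2*(3*N*(N+1)^2) + (J+1)*(N-J)*(3*N*(N+1)^2) + (N-J)^2*(N*(N+1)^2 - N*(7*N^2+7*N+2) - 8*(N-J-1)^3 - (4*(J+1)^3 - 22*N + 39*N*(J+2) - 18*N*(J+2)^2 - 32*N^2 + 27*N^2*(J+2) - 14*N^3)))*b^2 ) * hB

noncomputable def fr (n : ℕ) : ℚ := ∑ k ∈ Finset.range (n + 1), (n.choose k : ℚ) ^ 3

noncomputable def Ee (n j : ℕ) : ℚ := (n.choose j : ℚ)^3 * Pt (n:ℚ) ((j:ℚ)+1)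

lemma franel_rec (n : ℕ) :
    ((n:ℚ)+1)^2 * fr (n+1) = (7*(n:ℚ)^2+7*(n:ℚ)+2) * fr n + 8*(n:ℚ)^2 * fr (n-1) := by
  rcases Nat.eq_zero_or_pos n with rfl | hn
  · have h0 : fr 0 = 1 := by simp [fr]
    have h1 : fr 1 = 2 := by
      simp [fr, Finset.sum_range_succ]
      norm_num
    rw [h0, h1]; norm_num
  · have hne : (n:ℚ) ≠ 0 := by positivity
    have key : (n:ℚ) * (((n:ℚ)+1)^2 * fr (n+1) - (7*(n:ℚ)^2+7*(n:ℚ)+2) * fr n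
        - 8*(n:ℚ)^2 * fr (n-1)) = 0 := by
      have hfn1 : fr (n+1) = ∑ k ∈ Finset.range (n+2), ((n+1).choose k : ℚ)^3 := rfl
      have hfn : fr n = ∑ k ∈ Finset.range (n+2), (n.choose k : ℚ)^3 := by
        rw [fr, Finset.sum_range_succ (fun k => (n.choose k : ℚ)^3) (n+1)]
        simp [Nat.choose_eq_zero_of_lt]
      have hfn' : fr (n-1) = ∑ k ∈ Finset.range (n+2), ((n-1).choose k : ℚ)^3 := by
        rw [fr]
        have h1 : n - 1 + 1 = n := by omega
        rw [h1]
        rw [Finset.sum_range_succ (fun k => ((n-1).choose k : ℚ)^3) (n+1),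
            Finset.sum_range_succ (fun k => ((n-1).choose k : ℚ)^3) n]
        rw [Nat.choose_eq_zero_of_lt (by omega), Nat.choose_eq_zero_of_lt (by omega)]
        norm_num
      rw [hfn1, hfn, hfn']
      have : (n:ℚ) * (((n:ℚ)+1)^2 * ∑ k ∈ Finset.range (n+2), ((n+1).choose k : ℚ)^3
          - (7*(n:ℚ)^2+7*(n:ℚ)+2) * ∑ k ∈ Finset.range (n+2), (n.choose k : ℚ)^3
          - 8*(n:ℚ)^2 * ∑ k ∈ Finset.range (n+2), ((n-1).choose k : ℚ)^3)
          = ∑ k ∈ Finset.range (n+2),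
              ((n:ℚ)*((n:ℚ)+1)^2*((n+1).choose k:ℚ)^3
               - (n:ℚ)*(7*(n:ℚ)^2+7*(n:ℚ)+2)*(n.choose k:ℚ)^3
               - 8*(n:ℚ)^3*((n-1).choose k:ℚ)^3) := by
        rw [Finset.sum_sub_distrib, Finset.sum_sub_distrib]
        rw [← Finset.mul_sum, ← Finset.mul_sum, ← Finset.mul_sum]
        ring
      rw [this]
      have hsum : ∑ k ∈ Finset.range (n+2),
              ((n:ℚ)*((n:ℚ)+1)^2*((n+1).choose k:ℚ)^3
               - (n:ℚ)*(7*(n:ℚ)^2+7*(n:ℚ)+2)*(n.choose k:ℚ)^3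
               - 8*(n:ℚ)^3*((n-1).choose k:ℚ)^3) = Ee n (n+1) := by
        rw [Finset.sum_range_succ']
        have hstep : ∀ i, (n:ℚ)*((n:ℚ)+1)^2*((n+1).choose (i+1):ℚ)^3
               - (n:ℚ)*(7*(n:ℚ)^2+7*(n:ℚ)+2)*(n.choose (i+1):ℚ)^3
               - 8*(n:ℚ)^3*((n-1).choose (i+1):ℚ)^3 = Ee n (i+1) - Ee n i := by
          intro i
          have := claimS n i hn
          rw [Ee, Ee, Pt, Pt]
          rw [this, Pt, Pt]
          push_cast
          ring
        rw [Finset.sum_congr rfl (fun i _ => hstep i), Finset.sum_range_sub (Ee n)]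
        have h0 : (n:ℚ)*((n:ℚ)+1)^2*((n+1).choose 0:ℚ)^3
               - (n:ℚ)*(7*(n:ℚ)^2+7*(n:ℚ)+2)*(n.choose 0:ℚ)^3
               - 8*(n:ℚ)^3*((n-1).choose 0:ℚ)^3 = Ee n 0 := by
          simp [Ee, Pt]
          ring
        rw [h0]; ring
      rw [hsum, Ee, Nat.choose_eq_zero_of_lt (by omega)]
      norm_num
    have := mul_eq_zero.mp key
    rcases this with h | h
    · exact absurd h hne
    · linarith

/-- Generating function of the Franel numbers. -/
noncomputable def gc : PowerSeries ℚ :=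
  PowerSeries.mk fun n => ∑ k ∈ Finset.range (n + 1), (n.choose k : ℚ) ^ 3

lemma coeff_gc (n : ℕ) : coeff n gc = fr n := coeff_mk _ _

lemma gc_ODE :
    X^1 * (d⁄dX ℚ (d⁄dX ℚ gc)) - C 7 * (X^2 * (d⁄dX ℚ (d⁄dX ℚ gc)))
      - C 8 * (X^3 * (d⁄dX ℚ (d⁄dX ℚ gc)))
      + (d⁄dX ℚ gc) - C 14 * (X^1 * (d⁄dX ℚ gc)) - C 24 * (X^2 * (d⁄dX ℚ gc))
      - C 2 * gc - C 8 * (X^1 * gc) = 0 := by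
  ext m
  simp only [map_sub, map_add, coeff_C_mul, coeff_X_pow_mul', coeff_derivative, coeff_gc,
    map_zero]
  match m with
  | 0 =>
    norm_num
    have := franel_rec 0
    push_cast at this
    linarith
  | 1 =>
    norm_num
    have h0 := franel_rec 0
    have h1 := franel_rec 1
    push_cast at h0 h1
    linarith
  | 2 =>
    norm_num
    have h1 := franel_rec 1
    have h2 := franel_rec 2
    push_cast at h1 h2
    linarith
  | (m+3) =>
    have h : (1 ≤ m + 3) ∧ (2 ≤ m + 3) ∧ (3 ≤ m + 3) := by omega
    rw [if_pos h.1, if_pos h.2.1, if_pos h.2.2, if_pos h.1, if_pos h.2.1, if_pos h.1]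
    have e1 : m + 3 - 1 = m + 2 := rfl
    have e2 : m + 3 - 2 = m + 1 := rfl
    have e3 : m + 3 - 3 = m := rfl
    rw [e1, e2, e3]
    have h3 := franel_rec (m+3)
    have e4 : m + 3 - 1 = m + 2 := rfl
    rw [e4] at h3
    push_cast at h3 ⊢
    linarith

section main

noncomputable def qs : PowerSeries ℚ := 1 + 2*X + 4*X^2
noncomputable def ps : PowerSeries ℚ := 1 - X + X^2
noncomputable def ws : PowerSeries ℚ := X * ps * qs⁻¹
noncomputable def Nn : PowerSeries ℚ := 1 - 2*X - 3*X^2 + 4*X^3 + 4*X^4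

lemma hq0 : constantCoeff qs = 1 := by simp [qs]

lemma hqne : constantCoeff qs ≠ 0 := by rw [hq0]; norm_num

lemma hqnz : qs ≠ 0 := fun h => hqne (by rw [h]; simp)

lemma hqinv : qs⁻¹ * qs = 1 := PowerSeries.inv_mul_cancel qs hqne

lemma hqB0 : qs * qs⁻¹ = 1 := PowerSeries.mul_inv_cancel qs hqne

lemma hw0 : constantCoeff ws = 0 := by
  rw [ws]; simp [map_mul]

lemma D_one' : d⁄dX ℚ (1 : PowerSeries ℚ) = 0 := by
  rw [← map_one (C (R := ℚ)), derivative_C]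

lemma D_ofNat (n : ℕ) [n.AtLeastTwo] :
    d⁄dX ℚ (OfNat.ofNat n : PowerSeries ℚ) = 0 := by
  rw [← map_ofNat (C (R := ℚ)) n, derivative_C]

lemma hD2 : d⁄dX ℚ (2 : PowerSeries ℚ) = 0 := D_ofNat 2
lemma hD3 : d⁄dX ℚ (3 : PowerSeries ℚ) = 0 := D_ofNat 3
lemma hD4 : d⁄dX ℚ (4 : PowerSeries ℚ) = 0 := D_ofNat 4
lemma hD8 : d⁄dX ℚ (8 : PowerSeries ℚ) = 0 := D_ofNat 8

lemma hDq : d⁄dX ℚ qs = 2 + 8*X := by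
  rw [qs]
  simp only [map_add, Derivation.leibniz, Derivation.leibniz_pow, derivative_X, D_one',
    hD2, hD3, hD4, hD8, smul_eq_mul]
  ring

lemma hDp : d⁄dX ℚ ps = -1 + 2*X := by
  rw [ps]
  simp only [map_add, map_sub, Derivation.leibniz, Derivation.leibniz_pow, derivative_X, D_one',
    hD2, hD3, hD4, hD8, smul_eq_mul]
  ring

lemma hDN : d⁄dX ℚ Nn = -2 - 6*X + 12*X^2 + 16*X^3 := by
  rw [Nn]
  simp only [map_add, map_sub, Derivation.leibniz, Derivation.leibniz_pow, derivative_X, D_one',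
    hD2, hD3, hD4, hD8, smul_eq_mul]
  ring

lemma hD28 : d⁄dX ℚ (2 + 8*X : PowerSeries ℚ) = 8 := by
  simp only [map_add, Derivation.leibniz, derivative_X, D_one', hD2, hD8, smul_eq_mul]
  ring

lemma hwq : ws * qs = X * ps := by
  rw [ws, mul_assoc, hqinv, mul_one]

lemma hDwq2 : (d⁄dX ℚ ws) * qs^2 = Nn := by
  have hd := congrArg (d⁄dX ℚ) hwq
  simp only [Derivation.leibniz, smul_eq_mul, hDq, hDp, derivative_X] at hd
  have hwq' := hwq
  rw [Nn]
  simp only [qs, ps] at hd hwq' ⊢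
  linear_combination (1 + 2*X + 4*X^2) * hd - (2+8*X) * hwq'
end main

section main2

noncomputable def Gg : PowerSeries ℚ := psComp gc ws
noncomputable def Gg1 : PowerSeries ℚ := psComp (d⁄dX ℚ gc) ws
noncomputable def Gg2 : PowerSeries ℚ := psComp (d⁄dX ℚ (d⁄dX ℚ gc)) ws
noncomputable def Bb : PowerSeries ℚ := qs⁻¹ * Gg

lemma E0 : ws*Gg2 - 7*(ws^2*Gg2) - 8*(ws^3*Gg2) + Gg1 - 14*(ws*Gg1) - 24*(ws^2*Gg1)
    - 2*Gg - 8*(ws*Gg) = 0 := by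
  have h := congrArg (fun s => psComp s ws) gc_ODE
  simp only [psComp_sub, psComp_add, psComp_C_mul, psComp_X_pow_mul hw0, psComp_zero] at h
  simp only [map_ofNat] at h
  rw [show psComp gc ws = Gg from rfl, show psComp (d⁄dX ℚ gc) ws = Gg1 from rfl,
    show psComp (d⁄dX ℚ (d⁄dX ℚ gc)) ws = Gg2 from rfl] at h
  simpa [pow_one] using h

lemma hwq2 : ws^2 * qs^2 = (X*ps)^2 := by rw [← mul_pow, hwq]
lemma hwq3 : ws^3 * qs^3 = (X*ps)^3 := by rw [← mul_pow, hwq]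

lemma E1 : (X*ps)*qs^2*Gg2 - 7*(X*ps)^2*qs*Gg2 - 8*(X*ps)^3*Gg2
    + qs^3*Gg1 - 14*(X*ps)*qs^2*Gg1 - 24*(X*ps)^2*qs*Gg1
    - 2*qs^3*Gg - 8*(X*ps)*qs^2*Gg = 0 := by
  linear_combination qs^3*E0 + (-qs^2*Gg2 + 14*qs^2*Gg1 + 8*qs^2*Gg)*hwq
    + (7*qs*Gg2 + 24*qs*Gg1)*hwq2 + 8*Gg2*hwq3

lemma hDGq : qs^2 * d⁄dX ℚ Gg = Nn * Gg1 := by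
  have h := psComp_deriv hw0 gc
  rw [show psComp gc ws = Gg from rfl, show psComp (d⁄dX ℚ gc) ws = Gg1 from rfl] at h
  linear_combination qs^2 * h + Gg1 * hDwq2

lemma hDG1q : qs^2 * d⁄dX ℚ Gg1 = Nn * Gg2 := by
  have h := psComp_deriv hw0 (d⁄dX ℚ gc)
  rw [show psComp (d⁄dX ℚ gc) ws = Gg1 from rfl,
    show psComp (d⁄dX ℚ (d⁄dX ℚ gc)) ws = Gg2 from rfl] at h
  linear_combination qs^2 * h + Gg2 * hDwq2

lemma hqB : qs * Bb = Gg := by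
  rw [Bb, ← mul_assoc, hqB0, one_mul]

lemma r1 : qs^3 * d⁄dX ℚ Bb = Nn*Gg1 - qs*(2+8*X)*Gg := by
  have hd := congrArg (d⁄dX ℚ) hqB
  simp only [Derivation.leibniz, smul_eq_mul, hDq] at hd
  linear_combination qs^2*hd + hDGq - (qs*(2+8*X))*hqB

lemma r2 : qs^5 * d⁄dX ℚ (d⁄dX ℚ Bb) = Nn^2*Gg2
    + (qs^2*(-2 - 6*X + 12*X^2 + 16*X^3) - 4*qs*(2+8*X)*Nn)*Gg1
    + (2*(2+8*X)^2*qs^2 - 8*qs^3)*Gg := by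
  have hd2 := congrArg (d⁄dX ℚ) r1
  simp only [Derivation.leibniz, Derivation.leibniz_pow, smul_eq_mul, hDq, hDN, hD28,
    map_sub] at hd2
  linear_combination qs^2*hd2 + Nn*hDG1q - qs*(2+8*X)*hDGq - 3*qs*(2+8*X)*r1

lemma hT : (X - 7*X^4 - 8*X^7) * (d⁄dX ℚ (d⁄dX ℚ Bb)) + (1 - 28*X^3 - 56*X^6) * (d⁄dX ℚ Bb)
    + (-18*X^2 - 72*X^5) * Bb = 0 := by
  have h5 : qs^5 * ((X - 7*X^4 - 8*X^7) * (d⁄dX ℚ (d⁄dX ℚ Bb)) + (1 - 28*X^3 - 56*X^6) * (d⁄dX ℚ Bb)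
      + (-18*X^2 - 72*X^5) * Bb) = 0 := by
    have R1 := r1; have R2 := r2; have HB := hqB; have HE := E1
    simp only [qs, ps, Nn] at R1 R2 HB HE ⊢
    linear_combination (X - 7*X^4 - 8*X^7)*R2
      + (1 - 28*X^3 - 56*X^6)*(1 + 2*X + 4*X^2)^2*R1
      + (-18*X^2 - 72*X^5)*(1 + 2*X + 4*X^2)^4*HB
      + (1 + 2*X + 4*X^2)*(1 - 2*X - 3*X^2 + 4*X^3 + 4*X^4)*HE
  have := mul_left_cancel₀ (pow_ne_zero 5 hqnz) (h5.trans (mul_zero (qs^5)).symm)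
  simpa using this

lemma hT' : X^1 * (d⁄dX ℚ (d⁄dX ℚ Bb)) + C (-7) * (X^4 * (d⁄dX ℚ (d⁄dX ℚ Bb)))
    + C (-8) * (X^7 * (d⁄dX ℚ (d⁄dX ℚ Bb)))
    + (d⁄dX ℚ Bb) + C (-28) * (X^3 * (d⁄dX ℚ Bb)) + C (-56) * (X^6 * (d⁄dX ℚ Bb))
    + C (-18) * (X^2 * Bb) + C (-72) * (X^5 * Bb) = 0 := by
  simp only [map_neg, map_ofNat]
  linear_combination hT

noncomputable def bb (n : ℕ) : ℚ := coeff n Bb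

lemma hRec (m : ℕ) : ((m:ℚ)+1)^2 * bb (m+1)
    = (if 2 ≤ m then (7*((m:ℚ)-2)*((m:ℚ)+1)+18) * bb (m-2) else 0)
    + (if 5 ≤ m then 8*((m:ℚ)-2)^2 * bb (m-5) else 0) := by
  have hx := congrArg (coeff m) hT'
  simp only [map_add, coeff_C_mul, coeff_X_pow_mul', coeff_derivative, map_zero] at hx
  simp only [bb]
  rcases Nat.lt_or_ge m 7 with hm | hm
  · interval_cases m <;>
      (norm_num [coeff_zero_eq_constantCoeff] at hx ⊢) <;>
      linear_combination hx
  · obtain ⟨k, rfl⟩ : ∃ k, m = k + 7 := ⟨m - 7, by omega⟩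
    rw [if_pos (by omega : 2 ≤ k+7), if_pos (by omega : 5 ≤ k+7)]
    rw [if_pos (by omega : 1 ≤ k+7), if_pos (by omega : 4 ≤ k+7), if_pos (by omega : 7 ≤ k+7),
      if_pos (by omega : 3 ≤ k+7), if_pos (by omega : 6 ≤ k+7), if_pos (by omega : 2 ≤ k+7),
      if_pos (by omega : 5 ≤ k+7)] at hx
    simp only [show k+7-2 = k+5 by omega, show k+7-3 = k+4 by omega, show k+7-4 = k+3 by omega,
      show k+7-5 = k+2 by omega, show k+7-6 = k+1 by omega, show k+7-7 = k by omega] at hx ⊢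
    push_cast at hx ⊢
    linear_combination hx

end main2

noncomputable def aa (n : ℕ) : ℚ := if 3 ∣ n then fr (n / 3) else 0

lemma fr0 : fr 0 = 1 := by simp [fr]
lemma fr1 : fr 1 = 2 := by simp [fr, Finset.sum_range_succ]; norm_num

lemma aRec (m : ℕ) : ((m:ℚ)+1)^2 * aa (m+1)
    = (if 2 ≤ m then (7*((m:ℚ)-2)*((m:ℚ)+1)+18) * aa (m-2) else 0)
    + (if 5 ≤ m then 8*((m:ℚ)-2)^2 * aa (m-5) else 0) := by
  by_cases h3 : 3 ∣ (m+1)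
  · obtain ⟨j, hj⟩ : ∃ j, m = 3*j + 2 := by
      obtain ⟨t, ht⟩ := h3
      exact ⟨t - 1, by omega⟩
    subst hj
    have ha1 : aa (3*j+2+1) = fr (j+1) := by
      simp only [aa, if_pos (by omega : 3 ∣ 3*j+2+1)]
      congr 1; omega
    have ha2 : aa (3*j+2-2) = fr j := by
      simp only [show 3*j+2-2 = 3*j by omega, aa, if_pos (by omega : 3 ∣ 3*j)]
      congr 1; omega
    rw [ha1, if_pos (by omega : 2 ≤ 3*j+2), ha2]
    match j with
    | 0 =>
      rw [if_neg (by omega : ¬ 5 ≤ 3*0+2)]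
      norm_num [fr0, fr1]
    | (i+1) =>
      rw [if_pos (by omega : 5 ≤ 3*(i+1)+2)]
      have ha3 : aa (3*(i+1)+2-5) = fr i := by
        simp only [show 3*(i+1)+2-5 = 3*i by omega, aa, if_pos (by omega : 3 ∣ 3*i)]
        congr 1; omega
      rw [ha3]
      have h := franel_rec (i+1)
      rw [show i+1-1 = i from rfl] at h
      push_cast at h ⊢
      linear_combination (9:ℚ) * h
  · have hz1 : aa (m+1) = 0 := by simp [aa, h3]
    rw [hz1, mul_zero]
    have e1 : (if 2 ≤ m then (7*((m:ℚ)-2)*((m:ℚ)+1)+18) * aa (m-2) else 0) = 0 := by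
      split_ifs with h2
      · have : aa (m-2) = 0 := by
          simp only [aa, if_neg (show ¬ 3 ∣ (m-2) by omega)]
        rw [this, mul_zero]
      · rfl
    have e2 : (if 5 ≤ m then 8*((m:ℚ)-2)^2 * aa (m-5) else 0) = 0 := by
      split_ifs with h5
      · have : aa (m-5) = 0 := by
          simp only [aa, if_neg (show ¬ 3 ∣ (m-5) by omega)]
        rw [this, mul_zero]
      · rfl
    rw [e1, e2, add_zero]

lemma bb0 : bb 0 = 1 := by
  have h1 : constantCoeff qs⁻¹ = 1 := by
    rw [PowerSeries.constantCoeff_inv, hq0]; norm_num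
  have h2 : coeff 0 Gg = 1 := by
    rw [Gg, coeff_zero_psComp, coeff_gc, fr0]
  rw [bb, Bb, coeff_zero_eq_constantCoeff, map_mul, h1, one_mul,
    ← coeff_zero_eq_constantCoeff_apply, h2]

lemma bb_eq_aa : ∀ n, bb n = aa n := by
  intro n
  induction n using Nat.strong_induction_on with
  | _ n ih =>
    match n with
    | 0 => rw [bb0]; simp [aa, fr0]
    | (m+1) =>
      have hb := hRec m
      have ha := aRec m
      have hne : ((m:ℚ)+1)^2 ≠ 0 := by positivity
      apply mul_left_cancel₀ hne
      rw [hb, ha]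
      congr 1
      · split_ifs with h2
        · rw [ih (m-2) (by omega)]
        · rfl
      · split_ifs with h5
        · rw [ih (m-5) (by omega)]
        · rfl

theorem functional_equation_franel :
    psComp gc (X ^ 3)
      = (1 + 2 * X + 4 * X ^ 2 : PowerSeries ℚ)⁻¹
          * psComp gc (X * (1 - X + X ^ 2) * (1 + 2 * X + 4 * X ^ 2)⁻¹) := by
  have hBb : (1 + 2 * X + 4 * X ^ 2 : PowerSeries ℚ)⁻¹
      * psComp gc (X * (1 - X + X ^ 2) * (1 + 2 * X + 4 * X ^ 2)⁻¹) = Bb := rfl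
  rw [hBb]
  ext n
  rw [coeff_psComp_X_cubed, ← bb, bb_eq_aa, aa, coeff_gc]
end
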